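/- Let Γ be a group with subgroups Λ₁ ≤ Λ₂ ≤ Γ. Let X be a compact Hausdorff Γ-space that is (Γ,Λ₂)-amenable and (Λ₂,Λ₁)-amenable. Then X is (Γ,Λ₁)-amenable. -/
import Mathlib

open scoped Classical

section Aux

variable {ι : Type*}

lemma prob_summable {p : ι → ℝ} (h1 : ∑' i, p i = 1) : Summable p := by
  by_contra h
  rw [tsum_eq_zero_of_not_summable h] at h1
  norm_num at h1

lemma abs_sub_le_add' {a b : ℝ} (ha : 0 ≤ a) (hb : 0 ≤ b) : |a - b| ≤ a + b := by
  rw [abs_sub_le_iff]; constructor <;> linarith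

lemma tsum_abs_sub_le_two {p q : ι → ℝ} (hp0 : ∀ i, 0 ≤ p i) (hq0 : ∀ i, 0 ≤ q i)
    (hp1 : ∑' i, p i = 1) (hq1 : ∑' i, q i = 1) : ∑' i, |p i - q i| ≤ 2 := by
  have hp := prob_summable hp1
  have hq := prob_summable hq1
  calc ∑' i, |p i - q i| ≤ ∑' i, (p i + q i) :=
        Summable.tsum_le_tsum (fun i => abs_sub_le_add' (hp0 i) (hq0 i)) ((hp.sub hq).abs) (hp.add hq)
    _ = 2 := by rw [Summable.tsum_add hp hq, hp1, hq1]; norm_num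

lemma summable_smul_translate {G Q' : Type*} [Group G] [MulAction G Q'] (u : G) {p : Q' → ℝ}
    (hp : Summable p) : Summable (fun d => p (u • d)) :=
  ((MulAction.toPerm u).summable_iff).mpr hp

lemma tsum_smul_translate {G Q' : Type*} [Group G] [MulAction G Q'] (u : G) (p : Q' → ℝ) :
    ∑' d, p (u • d) = ∑' d, p d :=
  (MulAction.toPerm u).tsum_eq p

lemma exists_finset_mass {X : Type*} [TopologicalSpace X] [CompactSpace X]
    (η : X → ι → ℝ) (h0 : ∀ x i, 0 ≤ η x i) (h1 : ∀ x, ∑' i, η x i = 1)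
    (hc : ∀ i, Continuous fun x => η x i) {δ : ℝ} (hδ : 0 < δ) :
    ∃ S : Finset ι, ∀ x, 1 - δ < ∑ i ∈ S, η x i := by
  have key : ∀ x : X, ∃ S : Finset ι, 1 - δ < ∑ i ∈ S, η x i := by
    intro x
    have hs : HasSum (η x) 1 := by
      have := (prob_summable (h1 x)).hasSum
      rwa [h1 x] at this
    exact (hs.eventually (eventually_gt_nhds (by linarith : (1:ℝ) - δ < 1))).exists
  choose Sf hSf using key
  obtain ⟨t, ht⟩ := IsCompact.elim_finite_subcover isCompact_univ
    (fun x => {y : X | 1 - δ < ∑ i ∈ Sf x, η y i})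
    (fun x => isOpen_lt continuous_const (continuous_finset_sum _ fun i _ => hc i))
    (fun y _ => Set.mem_iUnion.mpr ⟨y, hSf y⟩)
  refine ⟨t.sup Sf, fun y => ?_⟩
  obtain ⟨x, hxt, hy⟩ := Set.mem_iUnion₂.mp (ht (Set.mem_univ y))
  calc 1 - δ < ∑ i ∈ Sf x, η y i := hy
    _ ≤ ∑ i ∈ t.sup Sf, η y i :=
        Finset.sum_le_sum_of_subset_of_nonneg (Finset.le_sup hxt) (fun i _ _ => h0 y i)

end Aux

section Key

variable {Γ : Type*} [Group Γ] {Λ₁ Λ₂ : Subgroup Γ}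

/-- A cross-section of `Γ ⧸ Λ₂`. -/
noncomputable def sig (Λ₂ : Subgroup Γ) : (Γ ⧸ Λ₂) → Γ := Quotient.out

lemma sig_spec (Λ₂ : Subgroup Γ) (a : Γ ⧸ Λ₂) : (QuotientGroup.mk (sig Λ₂ a) : Γ ⧸ Λ₂) = a :=
  Quotient.out_eq' a

lemma uMem (g : Γ) (a : Γ ⧸ Λ₂) : (sig Λ₂ a)⁻¹ * (g * sig Λ₂ (g⁻¹ • a)) ∈ Λ₂ := by
  rw [← QuotientGroup.eq]
  rw [show ((g * sig Λ₂ (g⁻¹ • a) : Γ) : Γ ⧸ Λ₂) = g • ((sig Λ₂ (g⁻¹ • a) : Γ) : Γ ⧸ Λ₂) from rfl,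
    sig_spec, sig_spec, smul_inv_smul]

/-- The "cocycle" element of `Λ₂` comparing `g` with the section at `a` and `g⁻¹ • a`. -/
noncomputable def uElt (Λ₂ : Subgroup Γ) (g : Γ) (a : Γ ⧸ Λ₂) : ↥Λ₂ :=
  ⟨(sig Λ₂ a)⁻¹ * (g * sig Λ₂ (g⁻¹ • a)), uMem g a⟩

lemma memGen (Λ₂ : Subgroup Γ) (k : Γ) : (sig Λ₂ (↑k : Γ ⧸ Λ₂))⁻¹ * k ∈ Λ₂ :=
  QuotientGroup.eq.mp (by rw [sig_spec])

lemma emk (h12 : Λ₁ ≤ Λ₂) (k : Γ) :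
    Subgroup.quotientEquivProdOfLE h12 (↑k : Γ ⧸ Λ₁) =
      ((↑k : Γ ⧸ Λ₂),
        (QuotientGroup.mk ⟨(sig Λ₂ (↑k : Γ ⧸ Λ₂))⁻¹ * k, memGen Λ₂ k⟩ :
          ↥Λ₂ ⧸ Λ₁.subgroupOf Λ₂)) := rfl

lemma key_equiv (h12 : Λ₁ ≤ Λ₂) (g : Γ) (c : Γ ⧸ Λ₁) :
    Subgroup.quotientEquivProdOfLE h12 (g⁻¹ • c) =
      (g⁻¹ • (Subgroup.quotientEquivProdOfLE h12 c).1,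
        ((uElt Λ₂ g (Subgroup.quotientEquivProdOfLE h12 c).1)⁻¹ : ↥Λ₂) •
          (Subgroup.quotientEquivProdOfLE h12 c).2) := by
  induction c using QuotientGroup.induction_on with
  | H k =>
    rw [emk h12 k]
    show Subgroup.quotientEquivProdOfLE h12 (↑(g⁻¹ * k) : Γ ⧸ Λ₁) = _
    rw [emk h12 (g⁻¹ * k)]
    refine Prod.ext rfl ?_
    show QuotientGroup.mk _ =
      QuotientGroup.mk ((uElt Λ₂ g ↑k)⁻¹ * ⟨(sig Λ₂ (↑k : Γ ⧸ Λ₂))⁻¹ * k, memGen Λ₂ k⟩)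
    refine congrArg QuotientGroup.mk (Subtype.ext ?_)
    show (sig Λ₂ (↑(g⁻¹ * k) : Γ ⧸ Λ₂))⁻¹ * (g⁻¹ * k) =
      ((sig Λ₂ (↑k : Γ ⧸ Λ₂))⁻¹ * (g * sig Λ₂ (g⁻¹ • (↑k : Γ ⧸ Λ₂))))⁻¹ *
        ((sig Λ₂ (↑k : Γ ⧸ Λ₂))⁻¹ * k)
    have hb : (g⁻¹ • (↑k : Γ ⧸ Λ₂)) = (↑(g⁻¹ * k) : Γ ⧸ Λ₂) := rfl
    rw [hb]
    group

end Key

/-- A `Γ`-space `X` is `(Γ,Λ)`-amenable: for every `ε > 0` and finite `E ⊆ Γ` there is a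
continuous (pointwise on each coset) map `μ : X → Prob(Γ/Λ)` with
`sup_x ‖g·μ(x) − μ(g x)‖₁ ≤ ε` for `g ∈ E`. -/
def RelAmenable (Γ : Type*) [Group Γ] (X : Type*) [TopologicalSpace X] [MulAction Γ X]
    (Λ : Subgroup Γ) : Prop :=
  ∀ ε > (0 : ℝ), ∀ E : Finset Γ,
    ∃ μ : X → (Γ ⧸ Λ) → ℝ,
      (∀ x c, 0 ≤ μ x c) ∧ (∀ x, ∑' c : Γ ⧸ Λ, μ x c = 1) ∧
      (∀ c, Continuous fun x => μ x c) ∧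
      ∀ g ∈ E, ∀ x : X, ∑' c : Γ ⧸ Λ, |μ x (g⁻¹ • c) - μ (g • x) c| < ε

set_option maxHeartbeats 2000000 in
/-- for `Λ₁ ≤ Λ₂ ≤ Γ` and a compact Hausdorff `Γ`-space `X`, if `X` is
`(Γ,Λ₂)`-amenable and `(Λ₂,Λ₁)`-amenable then `X` is `(Γ,Λ₁)`-amenable. -/
theorem stmt8 {Γ : Type*} [Group Γ] (Λ₁ Λ₂ : Subgroup Γ) (h12 : Λ₁ ≤ Λ₂)
    (X : Type*) [TopologicalSpace X] [CompactSpace X] [T2Space X] [MulAction Γ X]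
    (hcont : ∀ g : Γ, Continuous fun x : X => g • x)
    (h2 : RelAmenable Γ X Λ₂)
    (h1 : RelAmenable (↥Λ₂) X (Λ₁.subgroupOf Λ₂)) :
    RelAmenable Γ X Λ₁ := by
  classical
  intro ε hε E
  obtain ⟨η, hη0, hη1, hηc, hηE⟩ := h2 (ε/3) (by linarith) E
  obtain ⟨S, hS⟩ := exists_finset_mass η hη0 hη1 hηc (show (0:ℝ) < ε/12 by linarith)
  set F : Finset ↥Λ₂ := (E ×ˢ S).image fun p => uElt Λ₂ p.1 p.2 with hFdef
  obtain ⟨ν, hν0, hν1, hνc, hνF⟩ := h1 (ε/3) (by linarith) F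
  set e : (Γ ⧸ Λ₁) ≃ (Γ ⧸ Λ₂) × (↥Λ₂ ⧸ Λ₁.subgroupOf Λ₂) :=
    Subgroup.quotientEquivProdOfLE h12 with hedef
  set f : X → (Γ ⧸ Λ₂) × (↥Λ₂ ⧸ Λ₁.subgroupOf Λ₂) → ℝ :=
    fun x p => η x p.1 * ν ((sig Λ₂ p.1)⁻¹ • x) p.2 with hfdef
  have hf0 : ∀ x p, 0 ≤ f x p := fun x p => mul_nonneg (hη0 x p.1) (hν0 _ p.2)
  have hηs : ∀ x, Summable (η x) := fun x => prob_summable (hη1 x)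
  have hνs : ∀ y, Summable (ν y) := fun y => prob_summable (hν1 y)
  have hfslice : ∀ x a, Summable fun d => f x (a, d) := by
    intro x a
    show Summable fun d => η x a * ν ((sig Λ₂ a)⁻¹ • x) d
    exact (hνs _).mul_left _
  have hfsum : ∀ x, Summable (f x) := by
    intro x
    refine (summable_prod_of_nonneg (fun p => hf0 x p)).mpr ⟨hfslice x, ?_⟩
    have h : (fun a => ∑' d, f x (a, d)) = fun a => η x a := by
      funext a
      show ∑' d, η x a * ν ((sig Λ₂ a)⁻¹ • x) d = η x a
      rw [tsum_mul_left, hν1, mul_one]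
    rw [h]
    exact hηs x
  refine ⟨fun x c => f x (e c), fun x c => hf0 x (e c), ?_, ?_, ?_⟩
  · intro x
    rw [e.tsum_eq (f x), Summable.tsum_prod' (hfsum x) (hfslice x)]
    calc ∑' a, ∑' d, f x (a, d) = ∑' a, η x a := by
          refine tsum_congr fun a => ?_
          show ∑' d, η x a * ν ((sig Λ₂ a)⁻¹ • x) d = η x a
          rw [tsum_mul_left, hν1, mul_one]
      _ = 1 := hη1 x
  · intro c
    exact ((hηc (e c).1).mul ((hνc (e c).2).comp (hcont (sig Λ₂ (e c).1)⁻¹)))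
  · intro g hg x
    have he : ∀ c : Γ ⧸ Λ₁,
        e (g⁻¹ • c) = (g⁻¹ • (e c).1, ((uElt Λ₂ g (e c).1)⁻¹ : ↥Λ₂) • (e c).2) :=
      fun c => key_equiv h12 g c
    set Φ : (Γ ⧸ Λ₂) × (↥Λ₂ ⧸ Λ₁.subgroupOf Λ₂) ≃ (Γ ⧸ Λ₂) × (↥Λ₂ ⧸ Λ₁.subgroupOf Λ₂) :=
      e.symm.trans ((MulAction.toPerm (g⁻¹ : Γ)).trans e) with hΦdef
    have hΦapp : ∀ p, Φ p = (g⁻¹ • p.1, ((uElt Λ₂ g p.1)⁻¹ : ↥Λ₂) • p.2) := by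
      intro p
      show e (g⁻¹ • e.symm p) = _
      rw [he (e.symm p), Equiv.apply_symm_apply]
    set G : (Γ ⧸ Λ₂) × (↥Λ₂ ⧸ Λ₁.subgroupOf Λ₂) → ℝ :=
      fun p => |f x (g⁻¹ • p.1, ((uElt Λ₂ g p.1)⁻¹ : ↥Λ₂) • p.2) - f (g • x) p| with hGdef
    have hsum1 : Summable (fun p : (Γ ⧸ Λ₂) × (↥Λ₂ ⧸ Λ₁.subgroupOf Λ₂) =>
        f x (g⁻¹ • p.1, ((uElt Λ₂ g p.1)⁻¹ : ↥Λ₂) • p.2)) := by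
      have h : (fun p : (Γ ⧸ Λ₂) × (↥Λ₂ ⧸ Λ₁.subgroupOf Λ₂) =>
          f x (g⁻¹ • p.1, ((uElt Λ₂ g p.1)⁻¹ : ↥Λ₂) • p.2)) = (f x) ∘ Φ := by
        funext p
        show _ = f x (Φ p)
        rw [hΦapp p]
      rw [h]
      exact (hfsum x).comp_injective Φ.injective
    have hGsum : Summable G :=
      Summable.of_nonneg_of_le (fun p => abs_nonneg _)
        (fun p => abs_sub_le_add' (hf0 x _) (hf0 (g • x) _)) (hsum1.add (hfsum (g • x)))
    obtain ⟨hGslice, hGmarg⟩ := (summable_prod_of_nonneg (fun p => abs_nonneg (_ : ℝ))).mp hGsum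
    set y : (Γ ⧸ Λ₂) → X := fun a => (sig Λ₂ (g⁻¹ • a))⁻¹ • x with hydef
    have hpoint : ∀ a : Γ ⧸ Λ₂, ((uElt Λ₂ g a : Γ)) • y a = (sig Λ₂ a)⁻¹ • (g • x) := by
      intro a
      show ((sig Λ₂ a)⁻¹ * (g * sig Λ₂ (g⁻¹ • a))) • ((sig Λ₂ (g⁻¹ • a))⁻¹ • x)
        = (sig Λ₂ a)⁻¹ • (g • x)
      rw [smul_smul, smul_smul]
      congr 1
      group
    set Da : (Γ ⧸ Λ₂) → ℝ := fun a =>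
      ∑' d : ↥Λ₂ ⧸ Λ₁.subgroupOf Λ₂,
        |ν (y a) (((uElt Λ₂ g a)⁻¹ : ↥Λ₂) • d) - ν ((sig Λ₂ a)⁻¹ • (g • x)) d| with hDadef
    have htrans1 : ∀ a : Γ ⧸ Λ₂,
        ∑' d : ↥Λ₂ ⧸ Λ₁.subgroupOf Λ₂, ν (y a) (((uElt Λ₂ g a)⁻¹ : ↥Λ₂) • d) = 1 := by
      intro a
      rw [tsum_smul_translate ((uElt Λ₂ g a)⁻¹ : ↥Λ₂) (ν (y a))]
      exact hν1 (y a)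
    have hstrans : ∀ a : Γ ⧸ Λ₂,
        Summable (fun d : ↥Λ₂ ⧸ Λ₁.subgroupOf Λ₂ => ν (y a) (((uElt Λ₂ g a)⁻¹ : ↥Λ₂) • d)) :=
      fun a => summable_smul_translate _ (hνs (y a))
    have hDa0 : ∀ a, 0 ≤ Da a := fun a => tsum_nonneg (fun d => abs_nonneg _)
    have hDasum : ∀ a : Γ ⧸ Λ₂, Summable (fun d : ↥Λ₂ ⧸ Λ₁.subgroupOf Λ₂ =>
        |ν (y a) (((uElt Λ₂ g a)⁻¹ : ↥Λ₂) • d) - ν ((sig Λ₂ a)⁻¹ • (g • x)) d|) :=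
      fun a => ((hstrans a).sub (hνs _)).abs
    have hDa2 : ∀ a, Da a ≤ 2 := fun a =>
      tsum_abs_sub_le_two (fun d => hν0 _ _) (fun d => hν0 _ _) (htrans1 a) (hν1 _)
    have hDalt : ∀ a ∈ S, Da a < ε / 3 := by
      intro a ha
      have hu : uElt Λ₂ g a ∈ F :=
        Finset.mem_image.mpr ⟨(g, a), Finset.mem_product.mpr ⟨hg, ha⟩, rfl⟩
      have h := hνF (uElt Λ₂ g a) hu (y a)
      rwa [show ((uElt Λ₂ g a) • (y a) : X) = (sig Λ₂ a)⁻¹ • (g • x) from hpoint a] at h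
    have hinner : ∀ a : Γ ⧸ Λ₂,
        ∑' d : ↥Λ₂ ⧸ Λ₁.subgroupOf Λ₂, G (a, d)
          ≤ |η x (g⁻¹ • a) - η (g • x) a| + η (g • x) a * Da a := by
      intro a
      have hle : ∀ d : ↥Λ₂ ⧸ Λ₁.subgroupOf Λ₂, G (a, d) ≤
          |η x (g⁻¹ • a) - η (g • x) a| * ν (y a) (((uElt Λ₂ g a)⁻¹ : ↥Λ₂) • d)
          + η (g • x) a *
            |ν (y a) (((uElt Λ₂ g a)⁻¹ : ↥Λ₂) • d) - ν ((sig Λ₂ a)⁻¹ • (g • x)) d| := by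
        intro d
        show |η x (g⁻¹ • a) * ν (y a) (((uElt Λ₂ g a)⁻¹ : ↥Λ₂) • d)
            - η (g • x) a * ν ((sig Λ₂ a)⁻¹ • (g • x)) d| ≤ _
        set A := η x (g⁻¹ • a)
        set B := η (g • x) a
        set P := ν (y a) (((uElt Λ₂ g a)⁻¹ : ↥Λ₂) • d)
        set R := ν ((sig Λ₂ a)⁻¹ • (g • x)) d
        calc |A * P - B * R| = |(A - B) * P + B * (P - R)| := by ring_nf
          _ ≤ |(A - B) * P| + |B * (P - R)| := abs_add_le _ _
          _ = |A - B| * P + B * |P - R| := by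
              rw [abs_mul, abs_mul, abs_of_nonneg (hν0 _ _), abs_of_nonneg (hη0 _ _)]
      have hsA : Summable (fun d : ↥Λ₂ ⧸ Λ₁.subgroupOf Λ₂ =>
          |η x (g⁻¹ • a) - η (g • x) a| * ν (y a) (((uElt Λ₂ g a)⁻¹ : ↥Λ₂) • d)) :=
        (hstrans a).mul_left _
      have hsB : Summable (fun d : ↥Λ₂ ⧸ Λ₁.subgroupOf Λ₂ =>
          η (g • x) a *
            |ν (y a) (((uElt Λ₂ g a)⁻¹ : ↥Λ₂) • d) - ν ((sig Λ₂ a)⁻¹ • (g • x)) d|) :=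
        (hDasum a).mul_left _
      calc ∑' d : ↥Λ₂ ⧸ Λ₁.subgroupOf Λ₂, G (a, d)
          ≤ ∑' d : ↥Λ₂ ⧸ Λ₁.subgroupOf Λ₂,
            (|η x (g⁻¹ • a) - η (g • x) a| * ν (y a) (((uElt Λ₂ g a)⁻¹ : ↥Λ₂) • d)
            + η (g • x) a *
              |ν (y a) (((uElt Λ₂ g a)⁻¹ : ↥Λ₂) • d) - ν ((sig Λ₂ a)⁻¹ • (g • x)) d|) :=
          Summable.tsum_le_tsum hle (hGslice a) (hsA.add hsB)
        _ = |η x (g⁻¹ • a) - η (g • x) a| + η (g • x) a * Da a := by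
            rw [Summable.tsum_add hsA hsB, tsum_mul_left, tsum_mul_left, htrans1 a, mul_one]
    have hΔsum : Summable (fun a : Γ ⧸ Λ₂ => |η x (g⁻¹ • a) - η (g • x) a|) :=
      ((summable_smul_translate (g⁻¹ : Γ) (hηs x)).sub (hηs (g • x))).abs
    have hWsum : Summable (fun a : Γ ⧸ Λ₂ => η (g • x) a * Da a) :=
      Summable.of_nonneg_of_le (fun a => mul_nonneg (hη0 _ _) (hDa0 a))
        (fun a => mul_le_mul_of_nonneg_left (hDa2 a) (hη0 _ _)) ((hηs (g • x)).mul_right 2)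
    have hsum_le_one : ∑ a ∈ S, η (g • x) a ≤ 1 := by
      rw [← hη1 (g • x)]
      exact Summable.sum_le_tsum S (fun a _ => hη0 _ _) (hηs (g • x))
    have htail : ∑' a : ((↑S : Set (Γ ⧸ Λ₂))ᶜ : Set (Γ ⧸ Λ₂)), η (g • x) ↑a
        = 1 - ∑ a ∈ S, η (g • x) a := by
      have hsplit := Summable.tsum_add_tsum_compl (s := (↑S : Set (Γ ⧸ Λ₂)))
        ((hηs (g • x)).subtype _) ((hηs (g • x)).subtype _)
      rw [hη1 (g • x)] at hsplit
      have hfin : ∑' a : (↑S : Set (Γ ⧸ Λ₂)), η (g • x) ↑a = ∑ a ∈ S, η (g • x) a :=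
        Finset.tsum_subtype' S (η (g • x))
      linarith [hsplit, hfin]
    have hW : ∑' a : Γ ⧸ Λ₂, η (g • x) a * Da a ≤ ε / 3 + ε / 6 := by
      have hsplit := Summable.tsum_add_tsum_compl (s := (↑S : Set (Γ ⧸ Λ₂)))
        (hWsum.subtype _) (hWsum.subtype _)
      rw [← hsplit]
      have hb1 : ∑' a : (↑S : Set (Γ ⧸ Λ₂)), η (g • x) ↑a * Da ↑a ≤ ε / 3 := by
        rw [Finset.tsum_subtype' S (fun a => η (g • x) a * Da a)]
        calc ∑ a ∈ S, η (g • x) a * Da a ≤ ∑ a ∈ S, η (g • x) a * (ε / 3) :=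
              Finset.sum_le_sum fun a ha =>
                mul_le_mul_of_nonneg_left (le_of_lt (hDalt a ha)) (hη0 _ _)
          _ = (∑ a ∈ S, η (g • x) a) * (ε / 3) := by rw [← Finset.sum_mul]
          _ ≤ 1 * (ε / 3) := mul_le_mul_of_nonneg_right hsum_le_one (by linarith)
          _ = ε / 3 := one_mul _
      have hb2 : ∑' a : ((↑S : Set (Γ ⧸ Λ₂))ᶜ : Set (Γ ⧸ Λ₂)), η (g • x) ↑a * Da ↑a
          ≤ ε / 6 := by
        calc ∑' a : ((↑S : Set (Γ ⧸ Λ₂))ᶜ : Set (Γ ⧸ Λ₂)), η (g • x) ↑a * Da ↑a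
            ≤ ∑' a : ((↑S : Set (Γ ⧸ Λ₂))ᶜ : Set (Γ ⧸ Λ₂)), η (g • x) ↑a * 2 :=
              Summable.tsum_le_tsum (fun a => mul_le_mul_of_nonneg_left (hDa2 _) (hη0 _ _))
                (hWsum.subtype _) (((hηs (g • x)).mul_right 2).subtype _)
          _ = (∑' a : ((↑S : Set (Γ ⧸ Λ₂))ᶜ : Set (Γ ⧸ Λ₂)), η (g • x) ↑a) * 2 := tsum_mul_right
          _ = (1 - ∑ a ∈ S, η (g • x) a) * 2 := by rw [htail]
          _ ≤ (ε / 12) * 2 := by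
              have := hS (g • x)
              nlinarith
          _ = ε / 6 := by ring
      linarith
    have hrw : ∑' c : Γ ⧸ Λ₁, |f x (e (g⁻¹ • c)) - f (g • x) (e c)| = ∑' p, G p := by
      rw [← e.tsum_eq G]
      refine tsum_congr fun c => ?_
      show |f x (e (g⁻¹ • c)) - f (g • x) (e c)| = _
      rw [he c]
    calc ∑' c : Γ ⧸ Λ₁, |f x (e (g⁻¹ • c)) - f (g • x) (e c)|
        = ∑' p, G p := hrw
      _ = ∑' a, ∑' d, G (a, d) := Summable.tsum_prod' hGsum hGslice
      _ ≤ ∑' a : Γ ⧸ Λ₂, (|η x (g⁻¹ • a) - η (g • x) a| + η (g • x) a * Da a) :=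
          Summable.tsum_le_tsum hinner hGmarg (hΔsum.add hWsum)
      _ = (∑' a : Γ ⧸ Λ₂, |η x (g⁻¹ • a) - η (g • x) a|)
          + ∑' a : Γ ⧸ Λ₂, η (g • x) a * Da a := Summable.tsum_add hΔsum hWsum
      _ < ε / 3 + (ε / 3 + ε / 6) := by
          have h2b := hηE g hg x
          linarith [hW]
      _ < ε := by linarith
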